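/- Along any solution of the effective dynamics equations (with time-independent V_N of class C¹), the restricted Hamiltonian H_N(a(t), v(t), θ(t), μ(t)) = Σⱼ(μⱼvⱼ²/2 - μⱼ³/6) + V_N(a,v,θ,μ) is constant in time. -/

import Mathlib

/-- Along any solution of the effective dynamics equations (with
time-independent `V_N` of class `C¹`), the restricted Hamiltonian
`H_N = Σⱼ(μⱼvⱼ²/2 - μⱼ³/6) + V_N` is constant in time. Coordinates are
indexed by `Fin 4 × Fin N` with blocks `0,1,2,3` = `a,v,θ,μ`, and
`p t` is the solution curve. -/
theorem effective_dynamics_conserves_HN (N : ℕ)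
    (VN : (Fin 4 × Fin N → ℝ) → ℝ) (hVN : ContDiff ℝ 1 VN)
    (p : ℝ → (Fin 4 × Fin N → ℝ))
    (hdiff : ∀ i, Differentiable ℝ (fun t => p t i))
    (hμpos : ∀ t j, 0 < p t (3, j))
    (haeq : ∀ t j, deriv (fun s => p s (0, j)) t =
      p t (1, j) + (p t (3, j))⁻¹ * fderiv ℝ VN (p t) (Pi.single (1, j) 1))
    (hveq : ∀ t j, deriv (fun s => p s (1, j)) t =
      -(p t (3, j))⁻¹ * (fderiv ℝ VN (p t) (Pi.single (0, j) 1)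
        + p t (1, j) * fderiv ℝ VN (p t) (Pi.single (2, j) 1)))
    (hθeq : ∀ t j, deriv (fun s => p s (2, j)) t =
      (p t (1, j))^2/2 + (p t (3, j))^2/2
        + (p t (3, j))⁻¹ * p t (1, j) * fderiv ℝ VN (p t) (Pi.single (1, j) 1)
        - fderiv ℝ VN (p t) (Pi.single (3, j) 1))
    (hμeq : ∀ t j, deriv (fun s => p s (3, j)) t =
      fderiv ℝ VN (p t) (Pi.single (2, j) 1)) :
    ∀ t : ℝ,
      (∑ j, (p t (3, j) * (p t (1, j))^2 / 2 - (p t (3, j))^3 / 6)) + VN (p t) =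
      (∑ j, (p 0 (3, j) * (p 0 (1, j))^2 / 2 - (p 0 (3, j))^3 / 6)) + VN (p 0) := by
  set H : ℝ → ℝ := fun t =>
    (∑ j, (p t (3, j) * (p t (1, j))^2 / 2 - (p t (3, j))^3 / 6)) + VN (p t) with hH
  -- At each time, H has derivative 0.
  have key : ∀ t, HasDerivAt H 0 t := by
    intro t
    set q : Fin 4 × Fin N → ℝ := fun i => deriv (fun s => p s i) t with hq
    have hpi : HasDerivAt p q t :=
      hasDerivAt_pi.2 fun i => ((hdiff i) t).hasDerivAt
    -- derivative of the potential part
    have hVp : HasDerivAt (fun s => VN (p s)) (fderiv ℝ VN (p t) q) t :=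
      (hVN.differentiable one_ne_zero (p t)).hasFDerivAt.comp_hasDerivAt t hpi
    -- expand the directional derivative over coordinates
    have hexp : (fderiv ℝ VN (p t)) q
        = ∑ i, q i * fderiv ℝ VN (p t) (Pi.single i 1) := by
      have hq' : q = ∑ i, q i • (Pi.single i 1 : Fin 4 × Fin N → ℝ) := by
        funext j
        simp [Finset.sum_apply, Pi.single_apply, Finset.sum_ite_eq']
      conv_lhs => rw [hq']
      rw [map_sum]
      simp [smul_eq_mul]
    -- derivative of the kinetic part
    have hkin : ∀ j : Fin N, HasDerivAt
        (fun s => p s (3, j) * (p s (1, j))^2 / 2 - (p s (3, j))^3 / 6)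
        (((q (3, j)) * (p t (1, j))^2
            + p t (3, j) * (2 * (p t (1, j))^1 * q (1, j))) / 2
          - (3 * (p t (3, j))^2 * q (3, j)) / 6) t := by
      intro j
      have hμ : HasDerivAt (fun s => p s (3, j)) (q (3, j)) t :=
        ((hdiff (3, j)) t).hasDerivAt
      have hv : HasDerivAt (fun s => p s (1, j)) (q (1, j)) t :=
        ((hdiff (1, j)) t).hasDerivAt
      exact ((hμ.mul (hv.pow 2)).div_const 2).sub ((hμ.pow 3).div_const 6)
    have hsum : HasDerivAt
        (fun s => ∑ j, (p s (3, j) * (p s (1, j))^2 / 2 - (p s (3, j))^3 / 6))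
        (∑ j, (((q (3, j)) * (p t (1, j))^2
            + p t (3, j) * (2 * (p t (1, j))^1 * q (1, j))) / 2
          - (3 * (p t (3, j))^2 * q (3, j)) / 6)) t :=
      HasDerivAt.fun_sum fun j _ => hkin j
    have htot := hsum.add hVp
    have hzero : (∑ j, (((q (3, j)) * (p t (1, j))^2
            + p t (3, j) * (2 * (p t (1, j))^1 * q (1, j))) / 2
          - (3 * (p t (3, j))^2 * q (3, j)) / 6)) + fderiv ℝ VN (p t) q = 0 := by
      rw [hexp, Fintype.sum_prod_type]
      rw [Fin.sum_univ_four, ← Finset.sum_add_distrib, ← Finset.sum_add_distrib,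
        ← Finset.sum_add_distrib, ← Finset.sum_add_distrib]
      refine Finset.sum_eq_zero fun j _ => ?_
      have h0 := haeq t j
      have h1 := hveq t j
      have h2 := hθeq t j
      have h3 := hμeq t j
      have hμne : p t (3, j) ≠ 0 := (hμpos t j).ne'
      simp only [hq] at *
      rw [h0, h1, h2, h3]
      field_simp
      ring
    rw [hzero] at htot
    exact htot
  intro t
  have hdH : Differentiable ℝ H := fun t => (key t).differentiableAt
  have := is_const_of_deriv_eq_zero hdH (fun t => (key t).deriv) t 0
  simpa [hH] using this
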